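/- Let L = Σ_{j≥0} a_j T^j be a nonzero element of Λ = O[[T]] with Iwasawa invariants μ(L) = min_j ord_p(a_j) and λ(L) = min{j : ord_p(a_j) = μ(L)}. If L_n denotes the image of L in O[G_n] = O[[T]]/((1+T)^{p^n} - 1), then for all sufficiently large n, μ(L_n) = μ(L) and λ(L_n) = λ(L). -/

import Mathlib

/-- Let `O` be the ring of integers of a finite extension of `Q_p`, with valuation
`v = ord_p` (normalized so that `ord_p(p) = 1` and `v(x) = ∞ ↔ x = 0`).
Let `L = Σ a_j T^j` be a nonzero element of `Λ = O[[T]]`, with Iwasawa invariants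
`μ(L) = min_j ord_p(a_j)` and `λ(L) = min { j : ord_p(a_j) = μ(L) }`.
If `L_n` denotes the image of `L` in `O[G_n] = O[[T]]/((1+T)^{p^n} - 1)`
(represented by the polynomial `Q` of degree `< p^n` congruent to `L` modulo
`(1+T)^{p^n} - 1`, with `μ(L_n)` the minimum valuation of its coefficients and
`λ(L_n)` the least index achieving it), then for all sufficiently large `n`,
`μ(L_n) = μ(L)` and `λ(L_n) = λ(L)`. -/
theorem iwasawa_invariants_finite_level (p : ℕ) (hp : p.Prime) (hodd : Odd p)
    (O : Type*) [CommRing O] [IsDomain O]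
    (v : AddValuation O (WithTop ℚ)) (hvp : v (p : O) = 1)
    (hnn : ∀ x : O, 0 ≤ v x) (hvtop : ∀ x : O, v x = ⊤ ↔ x = 0)
    (L : PowerSeries O) (hL : L ≠ 0)
    (μL : WithTop ℚ)
    (hμL : IsLeast {x | ∃ j : ℕ, x = v (PowerSeries.coeff j L)} μL) :
    ∃ N : ℕ, ∀ n ≥ N, ∀ Q : Polynomial O, Q.degree < (p ^ n : ℕ) →
      (L - (Q : PowerSeries O)) ∈
        Ideal.span ({(1 + PowerSeries.X) ^ (p ^ n) - 1} : Set (PowerSeries O)) →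
      ((Finset.range (p ^ n)).inf' (Finset.nonempty_range_iff.mpr (pow_ne_zero n hp.ne_zero)) (fun j => v (Q.coeff j)) = μL ∧
        sInf {j | j < p ^ n ∧ v (Q.coeff j) = μL}
          = sInf {j : ℕ | v (PowerSeries.coeff j L) = μL}) := by
  classical
  -- basic facts about μL
  have hlb : ∀ j : ℕ, μL ≤ v (PowerSeries.coeff j L) := fun j => hμL.2 ⟨j, rfl⟩
  have hμtop : μL ≠ ⊤ := by
    intro htop
    apply hL
    ext j
    rw [map_zero, ← hvtop]
    have := hlb j
    rw [htop] at this
    simpa using top_le_iff.mp this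
  obtain ⟨q, hq⟩ := WithTop.ne_top_iff_exists.mp hμtop
  have hμlt : μL < 1 + μL := by
    rw [← hq, show ((1 : WithTop ℚ) + (q : WithTop ℚ)) = ((1 + q : ℚ) : WithTop ℚ) by push_cast; rfl,
      WithTop.coe_lt_coe]
    linarith
  -- λ
  set S : Set ℕ := {j : ℕ | v (PowerSeries.coeff j L) = μL} with hS
  have hSne : S.Nonempty := by
    obtain ⟨j0, hj0⟩ := hμL.1
    exact ⟨j0, hj0.symm⟩
  set lam : ℕ := sInf S with hlamdef
  have hlam_mem : lam ∈ S := Nat.sInf_mem hSne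
  refine ⟨lam + 1, fun n hn Q hdeg hmem => ?_⟩
  set m : ℕ := p ^ n with hm
  have hmne : m ≠ 0 := pow_ne_zero n hp.ne_zero
  have hlam_lt : lam < m := by
    calc lam < lam + 1 := Nat.lt_succ_self _
    _ < p ^ (lam + 1) := Nat.lt_pow_self hp.one_lt
    _ ≤ p ^ n := Nat.pow_le_pow_right hp.pos hn
  -- the auxiliary series g with (1+X)^m - 1 = X^m + p * g
  set g : PowerSeries O := PowerSeries.mk (fun k => ((m.choose k / p : ℕ) : O)) with hg
  have hF : ((1 + PowerSeries.X) ^ m - 1 : PowerSeries O)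
      = PowerSeries.X ^ m + PowerSeries.C (p : O) * g := by
    have hcoe : ((1 + PowerSeries.X : PowerSeries O)) ^ m
        = (((1 + Polynomial.X : Polynomial O) ^ m : Polynomial O) : PowerSeries O) := by
      rw [Polynomial.coe_pow, Polynomial.coe_add, Polynomial.coe_one, Polynomial.coe_X]
    ext k
    rw [map_sub, map_add, hcoe, Polynomial.coeff_coe, Polynomial.coeff_one_add_X_pow,
      PowerSeries.coeff_X_pow, PowerSeries.coeff_C_mul, hg, PowerSeries.coeff_mk,
      PowerSeries.coeff_one]
    by_cases hk0 : k = 0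
    · subst hk0
      simp [Nat.div_eq_of_lt hp.one_lt, (Ne.symm hmne)]
    · by_cases hkm : k = m
      · subst hkm
        simp [hk0, Nat.div_eq_of_lt hp.one_lt]
      · have hdvd : p ∣ m.choose k := hp.dvd_choose_pow hk0 hkm
        have : (p : O) * ((m.choose k / p : ℕ) : O) = ((m.choose k : ℕ) : O) := by
          rw [← Nat.cast_mul, Nat.mul_div_cancel' hdvd]
        simp [hk0, hkm, this]
  -- get the series R
  obtain ⟨R, hR⟩ := Ideal.mem_span_singleton'.mp hmem
  rw [hF] at hR
  -- the coefficient identity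
  have hid : ∀ j : ℕ, PowerSeries.coeff j L - PowerSeries.coeff j (Q : PowerSeries O)
      = PowerSeries.coeff j (R * PowerSeries.X ^ m)
        + PowerSeries.coeff j (R * (PowerSeries.C (p : O) * g)) := by
    intro j
    rw [← map_sub, ← map_add, ← mul_add, hR]
  -- bound on coefficients of R * (C p * g)
  have hstep : ∀ (b : WithTop ℚ), (∀ k, b ≤ v (PowerSeries.coeff k R)) → ∀ j,
      1 + b ≤ v (PowerSeries.coeff j (R * (PowerSeries.C (p : O) * g))) := by
    intro b hb j
    rw [PowerSeries.coeff_mul]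
    apply v.map_le_sum
    intro i _
    rw [v.map_mul, PowerSeries.coeff_C_mul, v.map_mul, hvp]
    calc 1 + b ≤ 1 + v (PowerSeries.coeff i.1 R) := by
          exact add_le_add le_rfl (hb i.1)
      _ ≤ (1 + v (PowerSeries.coeff i.2 g)) + v (PowerSeries.coeff i.1 R) := by
          exact add_le_add (le_add_of_nonneg_right (hnn _)) le_rfl
      _ = v (PowerSeries.coeff i.1 R) + (1 + v (PowerSeries.coeff i.2 g)) := by
          rw [add_comm]
  -- coefficients of R in terms of those of L
  have hrid : ∀ k : ℕ, PowerSeries.coeff k R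
      = PowerSeries.coeff (k + m) L
        - PowerSeries.coeff (k + m) (R * (PowerSeries.C (p : O) * g)) := by
    intro k
    have h0 : PowerSeries.coeff (k + m) (Q : PowerSeries O) = 0 := by
      rw [Polynomial.coeff_coe]
      apply Polynomial.coeff_eq_zero_of_degree_lt
      calc Q.degree < (m : WithBot ℕ) := hdeg
        _ ≤ ((k + m : ℕ) : WithBot ℕ) := by exact_mod_cast Nat.le_add_left m k
    have := hid (k + m)
    rw [h0, sub_zero, PowerSeries.coeff_mul_X_pow] at this
    exact eq_sub_of_add_eq this.symm
  -- inductive bound on coefficients of R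
  have hind : ∀ s : ℕ, ∀ k : ℕ, min μL ((s : ℚ) : WithTop ℚ) ≤ v (PowerSeries.coeff k R) := by
    intro s
    induction s with
    | zero =>
      intro k
      calc min μL (((0 : ℕ) : ℚ) : WithTop ℚ) ≤ (((0 : ℕ) : ℚ) : WithTop ℚ) := min_le_right _ _
        _ = 0 := by norm_num
        _ ≤ v (PowerSeries.coeff k R) := hnn _
    | succ s ih =>
      intro k
      rw [hrid k]
      apply v.map_le_sub
      · exact le_trans (min_le_left _ _) (hlb _)
      · calc min μL (((s + 1 : ℕ) : ℚ) : WithTop ℚ)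
            ≤ 1 + min μL (((s : ℕ) : ℚ) : WithTop ℚ) := by
              rcases le_total μL (((s : ℕ) : ℚ) : WithTop ℚ) with h | h
              · rw [min_eq_left h]
                exact le_trans (min_le_left _ _) (le_add_of_nonneg_left zero_le_one)
              · rw [min_eq_right h]
                refine le_trans (min_le_right _ _) (le_of_eq ?_)
                push_cast
                rw [add_comm]
          _ ≤ _ := hstep _ ih _
  have hRge : ∀ k : ℕ, μL ≤ v (PowerSeries.coeff k R) := by
    intro k
    have := hind (⌈q⌉₊) k
    rwa [min_eq_left ?_] at this
    rw [← hq, WithTop.coe_le_coe]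
    exact Nat.le_ceil q
  -- bound on the error terms
  have hE : ∀ j : ℕ, 1 + μL ≤ v (PowerSeries.coeff j (R * (PowerSeries.C (p : O) * g))) :=
    hstep μL hRge
  -- coefficients of Q
  have hqid : ∀ j : ℕ, j < m → Q.coeff j = PowerSeries.coeff j L
      - PowerSeries.coeff j (R * (PowerSeries.C (p : O) * g)) := by
    intro j hj
    have := hid j
    rw [PowerSeries.coeff_mul_X_pow', if_neg (by omega), zero_add,
      Polynomial.coeff_coe] at this
    have h2 := sub_eq_iff_eq_add.mp this
    rw [h2]
    abel
  have hq_ge : ∀ j : ℕ, j < m → μL ≤ v (Q.coeff j) := by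
    intro j hj
    rw [hqid j hj]
    exact v.map_le_sub (hlb j) (le_trans hμlt.le (hE j))
  have hq_iff : ∀ j : ℕ, j < m → (v (Q.coeff j) = μL ↔ v (PowerSeries.coeff j L) = μL) := by
    intro j hj
    constructor
    · intro hv
      by_contra hne
      have hgt : μL < v (PowerSeries.coeff j L) := lt_of_le_of_ne (hlb j) (Ne.symm hne)
      have : μL < v (Q.coeff j) := by
        rw [hqid j hj]
        calc μL < min (v (PowerSeries.coeff j L)) (1 + μL) := lt_min hgt hμlt
          _ ≤ _ := v.map_le_sub (min_le_left _ _)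
            (le_trans (min_le_right _ _) (hE j))
      exact this.ne' hv
    · intro hv
      rw [hqid j hj, v.map_sub_eq_of_lt_left, hv]
      rw [hv]
      exact lt_of_lt_of_le hμlt (hE j)
  -- conclusion
  have hlamS : v (PowerSeries.coeff lam L) = μL := hlam_mem
  constructor
  · apply le_antisymm
    · calc (Finset.range m).inf' _ (fun j => v (Q.coeff j)) ≤ v (Q.coeff lam) :=
          Finset.inf'_le _ (Finset.mem_range.mpr hlam_lt)
        _ = μL := (hq_iff lam hlam_lt).mpr hlamS
    · apply Finset.le_inf'
      intro j hj
      exact hq_ge j (Finset.mem_range.mp hj)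
  · have hset : {j | j < m ∧ v (Q.coeff j) = μL} = {j | j < m ∧ v (PowerSeries.coeff j L) = μL} := by
      ext j
      simp only [Set.mem_setOf_eq]
      exact and_congr_right fun hj => hq_iff j hj
    rw [hset]
    have hlam_in : lam ∈ {j | j < m ∧ v (PowerSeries.coeff j L) = μL} := ⟨hlam_lt, hlamS⟩
    apply le_antisymm
    · exact Nat.sInf_le hlam_in
    · have hne : ({j | j < m ∧ v (PowerSeries.coeff j L) = μL} : Set ℕ).Nonempty := ⟨lam, hlam_in⟩
      have := Nat.sInf_mem hne
      exact Nat.sInf_le this.2
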